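/- arXiv:2010.01599 — 4 statements merged into one kernel-verified Lean document; each statement's English description precedes it below -/
import Mathlib

section
/- Let $s,t \in \mathbb{R}_{\ge 0}^4$ and $u \in \mathbb{C}^4$. Suppose $\sqrt{s_2 t_2}+\sqrt{s_3 t_3} \ge |u_2|+|u_3|$ (inequality $W_1[2,3]$), and the inequality $W_{4a}[1,3]$: $\sqrt{s_1 t_1}+\sqrt{s_3 t_3}+2\min\{\sqrt{s_2 t_2},\sqrt{s_4 t_4}\} \ge |u_1|+|u_3|$. Then $\sqrt{s_1 t_1}+\sqrt{s_2 t_2}+2(\sqrt{s_3 t_3}+\sqrt{s_4 t_4}) \ge |u_1|+|u_2|+2|u_3|$. -/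
/-- W₁[2,3] and W₄ₐ[1,3] imply a component of W₄ᵦ[1,2]. 0-based indices. -/
theorem stmt_5 (s t : Fin 4 → ℝ) (hs : ∀ i, 0 ≤ s i) (ht : ∀ i, 0 ≤ t i)
    (u : Fin 4 → ℂ)
    (h23 : Real.sqrt (s 1 * t 1) + Real.sqrt (s 2 * t 2) ≥
      ‖u 1‖ + ‖u 2‖)
    (h4a : Real.sqrt (s 0 * t 0) + Real.sqrt (s 2 * t 2) +
        2 * min (Real.sqrt (s 1 * t 1)) (Real.sqrt (s 3 * t 3)) ≥
      ‖u 0‖ + ‖u 2‖) :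
    Real.sqrt (s 0 * t 0) + Real.sqrt (s 1 * t 1) +
        2 * (Real.sqrt (s 2 * t 2) + Real.sqrt (s 3 * t 3)) ≥
      ‖u 0‖ + ‖u 1‖ + 2 * ‖u 2‖ := by
  have h := min_le_right (Real.sqrt (s 1 * t 1)) (Real.sqrt (s 3 * t 3))
  linarith
end

section
/- Let $a,b \in \mathbb{R}_{\ge 0}^4$, $z \in \mathbb{C}^4$ and $s,t \in \mathbb{R}_{\ge 0}^4$, $u \in \mathbb{C}^4$. Assume: $|z_4| \ge |z_3| \ge \sqrt{a_1 b_1}$; the inequalities $S_4[1,i|3,4]$ for $i=2,3,4$, i.e. $\min\{\sqrt{a_1b_1}+\sqrt{a_ib_i}, \sqrt{a_kb_k}+\sqrt{a_\ell b_\ell}\} \ge \max\{|z_1|+|z_i|, |z_3|+|z_4|\}$ where $\{k,\ell\}$ is the complement of $\{1,i\}$; $S_1[1,2]$: $\min\{\sqrt{a_1b_1},\sqrt{a_2b_2}\} \ge \max\{|z_1|,|z_2|\}$; $W_2[4,1]$: $\sqrt{s_2t_2}+\sqrt{s_3t_3}+\sqrt{s_4t_4} \ge |u_4|$; $W_2[3,1]$: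 $\sqrt{s_2t_2}+\sqrt{s_3t_3}+\sqrt{s_4t_4} \ge |u_3|$; and $W_3$: $\sum_{i=1}^4\sqrt{s_it_i} \ge \sum_{i=1}^4|u_i|$. Then $\sum_{i=1}^4 \left(\sqrt{s_i t_i}\sqrt{a_i b_i} - |u_i||z_i|\right) \ge 0$. -/
/-- Core real inequality used in the Case I estimate. -/
lemma stmt_9_core (p0 P q0 m v0 v1 v2 v3 w0 w1 w2 w3 : ℝ)
    (hp0 : 0 ≤ p0) (hP : 0 ≤ P) (hq0 : 0 ≤ q0)
    (hv0 : 0 ≤ v0) (hv1 : 0 ≤ v1) (hv2 : 0 ≤ v2) (hv3 : 0 ≤ v3)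
    (hw0 : w0 ≤ q0) (hw1 : w1 ≤ q0) (hw23 : w2 ≤ w3) (hw2 : q0 ≤ w2)
    (hm3 : w3 ≤ m) (hqm : w2 + w3 ≤ q0 + m)
    (hPv2 : v2 ≤ P) (hPv3 : v3 ≤ P)
    (hsum : v0 + v1 + v2 + v3 ≤ p0 + P) :
    v0 * w0 + v1 * w1 + v2 * w2 + v3 * w3 ≤ p0 * q0 + P * m := by
  rcases le_or_gt (v2 + v3) P with h | h
  · nlinarith [mul_nonneg (by linarith : (0:ℝ) ≤ P - v2 - v3) (by linarith : (0:ℝ) ≤ m - q0),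
      mul_nonneg (by linarith : (0:ℝ) ≤ p0 + P - v0 - v1 - v2 - v3) hq0,
      mul_nonneg hv0 (by linarith : (0:ℝ) ≤ q0 - w0),
      mul_nonneg hv1 (by linarith : (0:ℝ) ≤ q0 - w1),
      mul_nonneg hv2 (by linarith : (0:ℝ) ≤ m - w2),
      mul_nonneg hv3 (by linarith : (0:ℝ) ≤ m - w3)]
  · set r := v2 + v3 - P with hr
    nlinarith [mul_nonneg (by linarith : (0:ℝ) ≤ p0 - v0 - v1 - r) hq0,
      mul_nonneg (by linarith : (0:ℝ) ≤ r) (by linarith : (0:ℝ) ≤ q0 - (w2 + w3 - m)),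
      mul_nonneg (by linarith : (0:ℝ) ≤ v2 - r) (by linarith : (0:ℝ) ≤ m - w2),
      mul_nonneg (by linarith : (0:ℝ) ≤ v3 - r) (by linarith : (0:ℝ) ≤ m - w3),
      mul_nonneg hv0 (by linarith : (0:ℝ) ≤ q0 - w0),
      mul_nonneg hv1 (by linarith : (0:ℝ) ≤ q0 - w1)]

/-- Case I estimate in the proof of Theorem 3.1. 0-based indices. -/
theorem stmt_9 (a b s t : Fin 4 → ℝ) (ha : ∀ i, 0 ≤ a i) (hb : ∀ i, 0 ≤ b i)
    (hs : ∀ i, 0 ≤ s i) (ht : ∀ i, 0 ≤ t i) (z u : Fin 4 → ℂ)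
    (hz43 : ‖z 3‖ ≥ ‖z 2‖)
    (hz31 : ‖z 2‖ ≥ Real.sqrt (a 0 * b 0))
    (hS4_12 : min (Real.sqrt (a 0 * b 0) + Real.sqrt (a 1 * b 1))
        (Real.sqrt (a 2 * b 2) + Real.sqrt (a 3 * b 3)) ≥
      max (‖z 0‖ + ‖z 1‖)
        (‖z 2‖ + ‖z 3‖))
    (hS4_13 : min (Real.sqrt (a 0 * b 0) + Real.sqrt (a 2 * b 2))
        (Real.sqrt (a 2 * b 2) + Real.sqrt (a 3 * b 3)) ≥
      max (‖z 0‖ + ‖z 2‖)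
        (‖z 2‖ + ‖z 3‖))
    (hS4_14 : min (Real.sqrt (a 0 * b 0) + Real.sqrt (a 3 * b 3))
        (Real.sqrt (a 2 * b 2) + Real.sqrt (a 3 * b 3)) ≥
      max (‖z 0‖ + ‖z 3‖)
        (‖z 2‖ + ‖z 3‖))
    (hS112 : min (Real.sqrt (a 0 * b 0)) (Real.sqrt (a 1 * b 1)) ≥
      max (‖z 0‖) (‖z 1‖))
    (hW241 : Real.sqrt (s 1 * t 1) + Real.sqrt (s 2 * t 2) + Real.sqrt (s 3 * t 3) ≥
      ‖u 3‖)
    (hW231 : Real.sqrt (s 1 * t 1) + Real.sqrt (s 2 * t 2) + Real.sqrt (s 3 * t 3) ≥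
      ‖u 2‖)
    (hW3 : ∑ i, Real.sqrt (s i * t i) ≥ ∑ i, ‖u i‖) :
    ∑ i, (Real.sqrt (s i * t i) * Real.sqrt (a i * b i) -
      ‖u i‖ * ‖z i‖) ≥ 0 := by
  set p : Fin 4 → ℝ := fun i => Real.sqrt (s i * t i) with hp
  set q : Fin 4 → ℝ := fun i => Real.sqrt (a i * b i) with hq
  set v : Fin 4 → ℝ := fun i => ‖u i‖ with hv
  set w : Fin 4 → ℝ := fun i => ‖z i‖ with hw
  have hpn : ∀ i, 0 ≤ p i := fun i => Real.sqrt_nonneg _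
  have hqn : ∀ i, 0 ≤ q i := fun i => Real.sqrt_nonneg _
  have hvn : ∀ i, 0 ≤ v i := fun i => norm_nonneg _
  have hwn : ∀ i, 0 ≤ w i := fun i => norm_nonneg _
  -- extract linear facts
  have h01 : w 2 + w 3 ≤ q 0 + q 1 :=
    le_trans (le_max_right _ _) (le_trans hS4_12 (min_le_left _ _))
  have h02 : w 2 + w 3 ≤ q 0 + q 2 :=
    le_trans (le_max_right _ _) (le_trans hS4_13 (min_le_left _ _))
  have h03 : w 2 + w 3 ≤ q 0 + q 3 :=
    le_trans (le_max_right _ _) (le_trans hS4_14 (min_le_left _ _))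
  have hw0 : w 0 ≤ q 0 := le_trans (le_max_left _ _) (le_trans hS112 (min_le_left _ _))
  have hw1 : w 1 ≤ q 0 := le_trans (le_max_right _ _) (le_trans hS112 (min_le_left _ _))
  have hq1 : w 3 ≤ q 1 := by have := hz31; linarith
  have hq2 : w 3 ≤ q 2 := by have := hz31; linarith
  have hq3 : w 3 ≤ q 3 := by have := hz31; linarith
  set m : ℝ := min (q 1) (min (q 2) (q 3)) with hm
  have hm1 : m ≤ q 1 := min_le_left _ _
  have hm2 : m ≤ q 2 := le_trans (min_le_right _ _) (min_le_left _ _)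
  have hm3 : m ≤ q 3 := le_trans (min_le_right _ _) (min_le_right _ _)
  have hmw3 : w 3 ≤ m := le_min hq1 (le_min hq2 hq3)
  have hqm : w 2 + w 3 ≤ q 0 + m := by
    have : w 2 + w 3 - q 0 ≤ m :=
      le_min (by linarith) (le_min (by linarith) (by linarith))
    linarith
  have hsum : v 0 + v 1 + v 2 + v 3 ≤ p 0 + (p 1 + p 2 + p 3) := by
    have h3 : Finset.univ.sum p ≥ Finset.univ.sum v := hW3
    simp only [Fin.sum_univ_four] at h3
    linarith
  have key := stmt_9_core (p 0) (p 1 + p 2 + p 3) (q 0) m (v 0) (v 1) (v 2) (v 3)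
      (w 0) (w 1) (w 2) (w 3) (hpn 0) (by linarith [hpn 1, hpn 2, hpn 3]) (hqn 0)
      (hvn 0) (hvn 1) (hvn 2) (hvn 3) hw0 hw1 hz43 hz31 hmw3 hqm hW231 hW241 hsum
  have expand : ∑ i, (p i * q i - v i * w i) =
      (p 0 * q 0 + p 1 * q 1 + p 2 * q 2 + p 3 * q 3) -
      (v 0 * w 0 + v 1 * w 1 + v 2 * w 2 + v 3 * w 3) := by
    simp [Fin.sum_univ_four]
  rw [show (∑ i, (Real.sqrt (s i * t i) * Real.sqrt (a i * b i) -
      ‖u i‖ * ‖z i‖)) = ∑ i, (p i * q i - v i * w i) from rfl, expand]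
  nlinarith [mul_le_mul_of_nonneg_left hm1 (hpn 1), mul_le_mul_of_nonneg_left hm2 (hpn 2),
    mul_le_mul_of_nonneg_left hm3 (hpn 3)]
end

section
/- Let $a,b \in \mathbb{R}_{\ge 0}^4$, $z \in \mathbb{C}^4$ and $s,t \in \mathbb{R}_{\ge 0}^4$, $u \in \mathbb{C}^4$. Assume: $|z_4| \ge \sqrt{a_1b_1}$ and $|z_4| \ge \sqrt{a_2b_2}$; $\sqrt{a_1b_1}+\sqrt{a_2b_2} - |z_4| \ge \max\{|z_1|,|z_2|,|z_3|\}$; $S_1[3,4]$: $\min\{\sqrt{a_3b_3},\sqrt{a_4b_4}\} \ge |z_4|$; $W_3$: $\sum_{i=1}^4\sqrt{s_it_i} \ge \sum_{i=1}^4|u_i|$; $W_2[4,1]$: $\sqrt{s_2t_2}+\sqrt{s_3t_3}+\sqrt{s_4t_4} \ge |u_4|$; and $W_2[4,2]$: $\sqrt{s_1t_1}+\sqrt{s_3t_3}+\sqrt{s_4t_4} \ge |u_4|$. Then $\sum_{i=1}^4 \left(\sqrt{s_it_i}\sqrt{a_ib_i} - |u_i||z_i|\right) \ge 0$. -/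
/-- Second case estimate in the proof of Theorem 3.1. 0-based indices. -/
theorem stmt_10 (a b s t : Fin 4 → ℝ) (ha : ∀ i, 0 ≤ a i) (hb : ∀ i, 0 ≤ b i)
    (hs : ∀ i, 0 ≤ s i) (ht : ∀ i, 0 ≤ t i) (z u : Fin 4 → ℂ)
    (hz41 : ‖z 3‖ ≥ Real.sqrt (a 0 * b 0))
    (hz42 : ‖z 3‖ ≥ Real.sqrt (a 1 * b 1))
    (hmax : Real.sqrt (a 0 * b 0) + Real.sqrt (a 1 * b 1) - ‖z 3‖ ≥
      max (‖z 0‖) (max (‖z 1‖) (‖z 2‖)))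
    (hS134 : min (Real.sqrt (a 2 * b 2)) (Real.sqrt (a 3 * b 3)) ≥ ‖z 3‖)
    (hW3 : ∑ i, Real.sqrt (s i * t i) ≥ ∑ i, ‖u i‖)
    (hW241 : Real.sqrt (s 1 * t 1) + Real.sqrt (s 2 * t 2) + Real.sqrt (s 3 * t 3) ≥
      ‖u 3‖)
    (hW242 : Real.sqrt (s 0 * t 0) + Real.sqrt (s 2 * t 2) + Real.sqrt (s 3 * t 3) ≥
      ‖u 3‖) :
    ∑ i, (Real.sqrt (s i * t i) * Real.sqrt (a i * b i) -
      ‖u i‖ * ‖z i‖) ≥ 0 := by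
  simp only [Fin.sum_univ_four] at hW3 ⊢
  set A0 := Real.sqrt (a 0 * b 0) with hA0
  set A1 := Real.sqrt (a 1 * b 1) with hA1
  set A2 := Real.sqrt (a 2 * b 2) with hA2
  set A3 := Real.sqrt (a 3 * b 3) with hA3
  set P0 := Real.sqrt (s 0 * t 0) with hP0
  set P1 := Real.sqrt (s 1 * t 1) with hP1
  set P2 := Real.sqrt (s 2 * t 2) with hP2
  set P3 := Real.sqrt (s 3 * t 3) with hP3
  set Z0 := ‖z 0‖
  set Z1 := ‖z 1‖
  set Z2 := ‖z 2‖
  set Z3 := ‖z 3‖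
  set Q0 := ‖u 0‖
  set Q1 := ‖u 1‖
  set Q2 := ‖u 2‖
  set Q3 := ‖u 3‖
  have hQ0 : 0 ≤ Q0 := norm_nonneg _
  have hQ1 : 0 ≤ Q1 := norm_nonneg _
  have hQ2 : 0 ≤ Q2 := norm_nonneg _
  have hQ3 : 0 ≤ Q3 := norm_nonneg _
  have hp0 : 0 ≤ P0 := Real.sqrt_nonneg _
  have hp1 : 0 ≤ P1 := Real.sqrt_nonneg _
  have hp2 : 0 ≤ P2 := Real.sqrt_nonneg _
  have hp3 : 0 ≤ P3 := Real.sqrt_nonneg _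
  have hZ0M : Z0 ≤ A0 + A1 - Z3 := le_trans (le_max_left _ _) hmax
  have hZ1M : Z1 ≤ A0 + A1 - Z3 :=
    le_trans (le_trans (le_max_left _ _) (le_max_right _ _)) hmax
  have hZ2M : Z2 ≤ A0 + A1 - Z3 :=
    le_trans (le_trans (le_max_right _ _) (le_max_right _ _)) hmax
  have hA2Z : Z3 ≤ A2 := le_trans hS134 (min_le_left _ _)
  have hA3Z : Z3 ≤ A3 := le_trans hS134 (min_le_right _ _)
  have hM : 0 ≤ A0 + A1 - Z3 := by
    have : (0:ℝ) ≤ Z0 := norm_nonneg _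
    linarith
  have h1 : 0 ≤ Q0 * (A0 + A1 - Z3 - Z0) := mul_nonneg hQ0 (by linarith)
  have h2 : 0 ≤ Q1 * (A0 + A1 - Z3 - Z1) := mul_nonneg hQ1 (by linarith)
  have h3 : 0 ≤ Q2 * (A0 + A1 - Z3 - Z2) := mul_nonneg hQ2 (by linarith)
  have h4 : 0 ≤ P2 * (A2 - Z3) := mul_nonneg hp2 (by linarith)
  have h5 : 0 ≤ P3 * (A3 - Z3) := mul_nonneg hp3 (by linarith)
  have h6 : 0 ≤ (A0 + A1 - Z3) * (P0 + P1 + P2 + P3 - (Q0 + Q1 + Q2 + Q3)) :=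
    mul_nonneg hM (by linarith)
  have h7 : 0 ≤ (P0 + P2 + P3 - Q3) * (Z3 - A1) :=
    mul_nonneg (by linarith) (by linarith)
  have h8 : 0 ≤ (P1 + P2 + P3 - Q3) * (Z3 - A0) :=
    mul_nonneg (by linarith) (by linarith)
  linarith [h1, h2, h3, h4, h5, h6, h7, h8]
end

section
/- Let $\mu_1,\mu_2,\mu_3 \ge 0$ with $\mu_2 \le \mu_3 \le \mu_1+\mu_2$, and let $p_1,p_2,p_3,p_4,q_1,q_2,q_3,q_4 \ge 0$ and $c \ge \mu_3$ satisfy: $\sum_i p_i \ge \sum_i q_i$; $p_2+p_3+p_4 \ge q_4$; $p_2+p_3 \ge q_2+q_3$; $p_1+p_4 \ge q_1+q_4$; and $2p_2+p_3+p_4 \ge q_3+q_4$. Then $\left(\sum_i p_i - \sum_i q_i\right)c + (p_2+p_3+p_4-q_4)\mu_1 + (-p_2+q_3)\mu_2 + (-p_3+q_2)\mu_3 \ge 0$. -/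
theorem stmt_19 (m1 m2 m3 c p1 p2 p3 p4 q1 q2 q3 q4 : ℝ)
    (hm1 : 0 ≤ m1) (hm2 : 0 ≤ m2) (hm3 : 0 ≤ m3)
    (h1 : m2 ≤ m3) (h2 : m3 ≤ m1 + m2) (hc : c ≥ m3)
    (hp1 : 0 ≤ p1) (hp2 : 0 ≤ p2) (hp3 : 0 ≤ p3) (hp4 : 0 ≤ p4)
    (hq1 : 0 ≤ q1) (hq2 : 0 ≤ q2) (hq3 : 0 ≤ q3) (hq4 : 0 ≤ q4)
    (h3 : p1 + p2 + p3 + p4 ≥ q1 + q2 + q3 + q4)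
    (h4 : p2 + p3 + p4 ≥ q4)
    (h5 : p2 + p3 ≥ q2 + q3)
    (h6 : p1 + p4 ≥ q1 + q4)
    (h7 : 2 * p2 + p3 + p4 ≥ q3 + q4) :
    (p1 + p2 + p3 + p4 - (q1 + q2 + q3 + q4)) * c +
      (p2 + p3 + p4 - q4) * m1 + (-p2 + q3) * m2 + (-p3 + q2) * m3 ≥ 0 := by
  rcases le_or_gt q3 p2 with h | h
  · nlinarith [mul_nonneg (sub_nonneg.2 h) (sub_nonneg.2 h1), mul_nonneg (sub_nonneg.2 hc) (sub_nonneg.2 (by linarith : q1 + q2 + q3 + q4 ≤ p1 + p2 + p3 + p4)), mul_nonneg hm3 (sub_nonneg.2 (by linarith : q2 + q3 ≤ p2 + p3)), mul_nonneg hm1 (sub_nonneg.2 (by linarith : q4 ≤ p2 + p3 + p4))]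
  · nlinarith [mul_nonneg (sub_nonneg.2 h.le) hm2, mul_nonneg (sub_nonneg.2 hc) (sub_nonneg.2 (by linarith : q1 + q2 + q3 + q4 ≤ p1 + p2 + p3 + p4)), mul_nonneg hm1 (sub_nonneg.2 (by linarith : q3 + q4 ≤ 2*p2 + p3 + p4)), mul_nonneg hm3 hq2, mul_nonneg (sub_nonneg.2 h2) hp3, mul_nonneg hm2 (sub_nonneg.2 (by linarith : q3 ≤ p2 + p3))]
end
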